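/- Let K be an N×N Hermitian contracting matrix with strictly positive diagonal entries, P a determinantal sampling design with kernel K, y = (y_1,…,y_N) a real vector and w = (w_1,…,w_N) a real vector with w_k ≠ 0 for all k. Set t_y = ∑_{k∈U} y_k and t̂_{yw}(s) = ∑_{k∈s} w_k y_k. Then the mean square error satisfies the bound ∑_{s ⊆ U} P(s)·(t̂_{yw}(s) − t_y)² ≤ (1 + ∑_{k=1}^N K_{kk}(1 − 1/(K_{kk} w_k))²) · (∑_{k=1}^N K_{kk}(w_k y_k)²). In particular, for the Horvitz–Thompson weights w_k = 1/K_{kk}, the variance is bounded by ∑_{k=1}^N y_k² / K_{kk}. -/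

import Mathlib

open Finset Matrix Complex ComplexOrder

/-- `P` is a determinantal sampling design with kernel `K`:
for every `s ⊆ U`, `∑_{s' ⊇ s} P(s') = det(K_{|s})`. -/
def IsDSD {N : ℕ} (P : Finset (Fin N) → ℝ) (K : Matrix (Fin N) (Fin N) ℂ) : Prop :=
  ∀ s : Finset (Fin N),
    ((∑ s' ∈ Finset.univ.filter (fun s' => s ⊆ s'), P s' : ℝ) : ℂ) =
      (K.submatrix (fun i : {x // x ∈ s} => i.1) (fun j : {x // x ∈ s} => j.1)).det

lemma det_singleton {N : ℕ} (K : Matrix (Fin N) (Fin N) ℂ) (k : Fin N) :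
    (K.submatrix (fun i : {x // x ∈ ({k} : Finset (Fin N))} => i.1)
      (fun j : {x // x ∈ ({k} : Finset (Fin N))} => j.1)).det = K k k := by
  have e := (({k} : Finset (Fin N)).orderIsoOfFin (Finset.card_singleton k)).toEquiv
  rw [← Matrix.det_submatrix_equiv_self e, Matrix.submatrix_submatrix, Matrix.det_fin_one]
  have h : ((e 0 : {x // x ∈ ({k} : Finset (Fin N))}) : Fin N) = k := by
    have := (e 0).2
    rwa [Finset.mem_singleton] at this
  simp [Function.comp, h]

lemma det_pair {N : ℕ} (K : Matrix (Fin N) (Fin N) ℂ) (k l : Fin N) (hkl : k ≠ l) :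
    (K.submatrix (fun i : {x // x ∈ ({k, l} : Finset (Fin N))} => i.1)
      (fun j : {x // x ∈ ({k, l} : Finset (Fin N))} => j.1)).det
      = K k k * K l l - K k l * K l k := by
  have e := (({k, l} : Finset (Fin N)).orderIsoOfFin (Finset.card_pair hkl)).toEquiv
  rw [← Matrix.det_submatrix_equiv_self e, Matrix.submatrix_submatrix, Matrix.det_fin_two]
  set v : Fin 2 → Fin N := fun i => ((e i : {x // x ∈ ({k, l} : Finset (Fin N))}) : Fin N) with hv
  have hmem : ∀ i, v i ∈ ({k, l} : Finset (Fin N)) := fun i => (e i).2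
  have hvinj : Function.Injective v :=
    Subtype.val_injective.comp e.injective
  have hne : v 0 ≠ v 1 := fun h => by simpa using hvinj h
  have h0 := hmem 0
  have h1 := hmem 1
  simp only [Finset.mem_insert, Finset.mem_singleton] at h0 h1
  show K (v 0) (v 0) * K (v 1) (v 1) - K (v 0) (v 1) * K (v 1) (v 0) = _
  rcases h0 with h0 | h0 <;> rcases h1 with h1 | h1
  · exact absurd (h0.trans h1.symm) hne
  · rw [h0, h1]
  · rw [h0, h1]; ring
  · exact absurd (h0.trans h1.symm) hne

open scoped MatrixOrder in
lemma Q_nonneg {N : ℕ} (K : Matrix (Fin N) (Fin N) ℂ) (hK : K.IsHermitian)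
    (hpsd : K.PosSemidef) (a : Fin N → ℝ) :
    0 ≤ ∑ k, ∑ l, a k * a l * Complex.normSq (K k l) := by
  classical
  set D : Matrix (Fin N) (Fin N) ℂ := Matrix.diagonal (fun k => (a k : ℂ)) with hD
  set B : Matrix (Fin N) (Fin N) ℂ := CFC.sqrt K with hBdef
  have hB : B * B = K := CFC.sqrt_mul_sqrt_self K hpsd.nonneg
  have hBH : Bᴴ = B := (CFC.sqrt_nonneg K).posSemidef.1
  set C : Matrix (Fin N) (Fin N) ℂ := B * D * B with hCdef
  have hDH : Dᴴ = D := by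
    ext i j
    by_cases h : i = j
    · simp [hD, Matrix.conjTranspose_apply, Matrix.diagonal_apply, h, Complex.conj_ofReal]
    · simp only [hD, Matrix.conjTranspose_apply, Matrix.diagonal_apply, h, if_false]
      rw [if_neg (fun h' => h h'.symm), star_zero]
  have hCH : Cᴴ = C := by
    rw [hCdef, Matrix.conjTranspose_mul, Matrix.conjTranspose_mul, hBH, hDH]
    rw [Matrix.mul_assoc]
  have htr1 : Matrix.trace ((D * K) * (D * K)) = Matrix.trace (Cᴴ * C) := by
    rw [hCH]
    have h1 : (D * K) * (D * K) = (D * B) * (B * (D * (B * B))) := by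
      rw [← hB]; simp only [Matrix.mul_assoc]
    have h2 : C * C = (B * (D * (B * B))) * (D * B) := by
      rw [hCdef]; simp only [Matrix.mul_assoc]
    rw [h1, h2, Matrix.trace_mul_comm]
  have htr2 : Matrix.trace (Cᴴ * C) = ((∑ k, ∑ l, Complex.normSq (C l k) : ℝ) : ℂ) := by
    simp only [Matrix.trace, Matrix.diag, Matrix.mul_apply, Matrix.conjTranspose_apply]
    push_cast
    refine Finset.sum_congr rfl fun k _ => Finset.sum_congr rfl fun l _ => ?_
    rw [Complex.star_def, ← Complex.normSq_eq_conj_mul_self]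
  have htr3 : Matrix.trace ((D * K) * (D * K))
      = ((∑ k, ∑ l, a k * a l * Complex.normSq (K k l) : ℝ) : ℂ) := by
    simp only [Matrix.trace, Matrix.diag, Matrix.mul_apply, hD, Matrix.diagonal_apply,
      ite_mul, zero_mul, Finset.sum_ite_eq, Finset.mem_univ, if_true]
    push_cast
    refine Finset.sum_congr rfl fun k _ => Finset.sum_congr rfl fun l _ => ?_
    have hherm : K l k = starRingEnd ℂ (K k l) := by
      have := hK.apply l k
      rw [← this]
      rfl
    rw [hherm]
    rw [show (a k : ℂ) * K k l * ((a l : ℂ) * starRingEnd ℂ (K k l))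
        = (a k : ℂ) * (a l : ℂ) * (K k l * starRingEnd ℂ (K k l)) by ring,
      Complex.mul_conj]
  have : ((∑ k, ∑ l, a k * a l * Complex.normSq (K k l) : ℝ) : ℂ)
      = ((∑ k, ∑ l, Complex.normSq (C l k) : ℝ) : ℂ) := by
    rw [← htr3, htr1, htr2]
  rw [Complex.ofReal_inj] at this
  rw [this]
  exact Finset.sum_nonneg fun k _ => Finset.sum_nonneg fun l _ => Complex.normSq_nonneg _

/-- indicator -/
def dsdInd {N : ℕ} (s : Finset (Fin N)) (k : Fin N) : ℝ := if k ∈ s then 1 else 0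

lemma mse_core {N : ℕ} (P : Finset (Fin N) → ℝ) (hsum : ∑ s, P s = 1)
    (a π : Fin N → ℝ) (q : Fin N → Fin N → ℝ) (t : ℝ)
    (h1 : ∀ k, (∑ s, P s * dsdInd s k) = π k)
    (hm : ∀ k l, (∑ s, P s * dsdInd s k * dsdInd s l)
      = π k * π l - q k l + (if k = l then π k else 0)) :
    (∑ s : Finset (Fin N), P s * ((∑ k ∈ s, a k) - t) ^ 2)
      = ((∑ k, a k * π k) - t) ^ 2 + (∑ k, π k * a k ^ 2)
        - (∑ k, ∑ l, a k * a l * q k l) := by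
  classical
  have hT : ∀ s : Finset (Fin N), (∑ k ∈ s, a k) = ∑ k, dsdInd s k * a k := by
    intro s
    simp [dsdInd, ite_mul, Finset.sum_ite_mem]
  have hB2 : (∑ s, P s * (∑ k, dsdInd s k * a k)) = ∑ k, a k * π k := by
    simp only [Finset.mul_sum]
    rw [Finset.sum_comm]
    refine Finset.sum_congr rfl fun k _ => ?_
    rw [← h1 k, Finset.mul_sum]
    exact Finset.sum_congr rfl fun s _ => by ring
  have hA2 : (∑ s, P s * ((∑ k, dsdInd s k * a k) * (∑ l, dsdInd s l * a l)))
      = ∑ k, ∑ l, a k * a l * (∑ s, P s * dsdInd s k * dsdInd s l) := by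
    have step : ∀ s, P s * ((∑ k, dsdInd s k * a k) * (∑ l, dsdInd s l * a l))
        = ∑ k, ∑ l, a k * a l * (P s * dsdInd s k * dsdInd s l) := by
      intro s
      rw [Finset.sum_mul_sum, Finset.mul_sum]
      refine Finset.sum_congr rfl fun k _ => ?_
      rw [Finset.mul_sum]
      exact Finset.sum_congr rfl fun l _ => by ring
    simp_rw [step]
    rw [Finset.sum_comm]
    refine Finset.sum_congr rfl fun k _ => ?_
    rw [Finset.sum_comm]
    refine Finset.sum_congr rfl fun l _ => ?_
    rw [Finset.mul_sum]
  have expand : (∑ s : Finset (Fin N), P s * ((∑ k ∈ s, a k) - t) ^ 2)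
      = (∑ k, ∑ l, a k * a l * (∑ s, P s * dsdInd s k * dsdInd s l))
        - 2 * t * (∑ k, a k * π k) + t ^ 2 := by
    have e1 : ∀ s : Finset (Fin N), P s * ((∑ k ∈ s, a k) - t) ^ 2
        = P s * ((∑ k, dsdInd s k * a k) * (∑ l, dsdInd s l * a l))
          - 2 * t * (P s * (∑ k, dsdInd s k * a k)) + t ^ 2 * P s := by
      intro s; rw [hT s]; ring
    rw [Finset.sum_congr rfl fun s _ => e1 s, Finset.sum_add_distrib,
      Finset.sum_sub_distrib, ← Finset.mul_sum, ← Finset.mul_sum, hA2, hB2, hsum, mul_one]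
  have hsum2 : (∑ k, ∑ l, a k * a l * (∑ s, P s * dsdInd s k * dsdInd s l))
      = (∑ k, a k * π k) ^ 2 - (∑ k, ∑ l, a k * a l * q k l)
        + (∑ k, π k * a k ^ 2) := by
    have e : ∀ k l, a k * a l * (∑ s, P s * dsdInd s k * dsdInd s l)
        = (a k * π k) * (a l * π l) - a k * a l * q k l
          + (if k = l then π k * a k ^ 2 else 0) := by
      intro k l
      rw [hm k l]
      by_cases h : k = l
      · subst h; rw [if_pos rfl, if_pos rfl]; ring
      · rw [if_neg h, if_neg h]; ring
    simp_rw [e]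
    simp only [Finset.sum_add_distrib, Finset.sum_sub_distrib]
    congr 1
    · congr 1
      rw [sq, Finset.sum_mul_sum]
    · refine Finset.sum_congr rfl fun k _ => ?_
      simp
  rw [expand, hsum2]
  ring

lemma mse_key {N : ℕ} (K : Matrix (Fin N) (Fin N) ℂ) (hK : K.IsHermitian)
    (hpsd : K.PosSemidef) (hdiag : ∀ k, 0 < (K k k).re)
    (P : Finset (Fin N) → ℝ) (hsum : ∑ s, P s = 1)
    (hDSD : IsDSD P K) (y w : Fin N → ℝ) (hw : ∀ k, w k ≠ 0) :
    (∑ s : Finset (Fin N), P s * ((∑ k ∈ s, w k * y k) - ∑ k, y k) ^ 2) ≤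
      (1 + ∑ k, (K k k).re * (1 - 1 / ((K k k).re * w k)) ^ 2) *
        (∑ k, (K k k).re * (w k * y k) ^ 2) := by
  classical
  have hdsd1 : ∀ k : Fin N,
      ((∑ s' ∈ Finset.univ.filter (fun s' => ({k} : Finset (Fin N)) ⊆ s'), P s' : ℝ) : ℂ)
        = K k k := fun k => (hDSD {k}).trans (det_singleton K k)
  have hπPr : ∀ k : Fin N,
      (K k k).re = ∑ s' ∈ Finset.univ.filter (fun s' => ({k} : Finset (Fin N)) ⊆ s'), P s' := by
    intro k
    rw [← hdsd1 k]
    simp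
  have hKkk : ∀ k, K k k = (((K k k).re : ℝ) : ℂ) := by
    intro k
    rw [hπPr k]
    exact (hdsd1 k).symm
  have hpair : ∀ k l, k ≠ l →
      (∑ s' ∈ Finset.univ.filter (fun s' => ({k, l} : Finset (Fin N)) ⊆ s'), P s')
        = (K k k).re * (K l l).re - Complex.normSq (K k l) := by
    intro k l hkl
    have h := (hDSD {k, l}).trans (det_pair K k l hkl)
    have hlk : K l k = starRingEnd ℂ (K k l) := by
      have := hK.apply l k
      rw [← this]; rfl
    rw [hKkk k, hKkk l, hlk, Complex.mul_conj] at h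
    exact_mod_cast h
  have h1 : ∀ k : Fin N, (∑ s, P s * dsdInd s k) = (K k k).re := by
    intro k
    rw [hπPr k, Finset.sum_filter]
    refine Finset.sum_congr rfl fun s _ => ?_
    by_cases hk : k ∈ s <;> simp [dsdInd, hk, Finset.singleton_subset_iff]
  have hmPr : ∀ k l : Fin N, (∑ s, P s * dsdInd s k * dsdInd s l)
      = ∑ s' ∈ Finset.univ.filter (fun s' => ({k, l} : Finset (Fin N)) ⊆ s'), P s' := by
    intro k l
    rw [Finset.sum_filter]
    refine Finset.sum_congr rfl fun s _ => ?_
    by_cases hk : k ∈ s <;> by_cases hl : l ∈ s <;>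
      simp [dsdInd, hk, hl, Finset.insert_subset_iff]
  have hm : ∀ k l : Fin N, (∑ s, P s * dsdInd s k * dsdInd s l)
      = (K k k).re * (K l l).re - Complex.normSq (K k l)
        + (if k = l then (K k k).re else 0) := by
    intro k l
    by_cases hkl : k = l
    · subst hkl
      have hkk : ({k, k} : Finset (Fin N)) = {k} := by simp
      have hns : Complex.normSq (K k k) = (K k k).re * (K k k).re := by
        conv_lhs => rw [hKkk k]
        exact Complex.normSq_ofReal _
      rw [hmPr, hkk, ← hπPr, if_pos rfl, hns]
      ring
    · rw [hmPr, hpair k l hkl, if_neg hkl, add_zero]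
  have hexp := mse_core P hsum (fun k => w k * y k) (fun k => (K k k).re)
    (fun k l => Complex.normSq (K k l)) (∑ k, y k) h1 hm
  rw [hexp]
  have hQ0 : 0 ≤ ∑ k, ∑ l, (w k * y k) * (w l * y l) * Complex.normSq (K k l) :=
    Q_nonneg K hK hpsd (fun k => w k * y k)
  -- Cauchy–Schwarz for the bias term
  have hCS := Finset.sum_mul_sq_le_sq_mul_sq Finset.univ
    (fun k => Real.sqrt ((K k k).re) * (1 - 1 / ((K k k).re * w k)))
    (fun k => Real.sqrt ((K k k).re) * (w k * y k))
  have e1 : (∑ k, (Real.sqrt ((K k k).re) * (1 - 1 / ((K k k).re * w k)))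
        * (Real.sqrt ((K k k).re) * (w k * y k)))
      = (∑ k, (w k * y k) * (K k k).re) - ∑ k, y k := by
    rw [← Finset.sum_sub_distrib]
    refine Finset.sum_congr rfl fun k _ => ?_
    have hs : Real.sqrt ((K k k).re) * Real.sqrt ((K k k).re) = (K k k).re :=
      Real.mul_self_sqrt (hdiag k).le
    rw [show (Real.sqrt ((K k k).re) * (1 - 1 / ((K k k).re * w k)))
        * (Real.sqrt ((K k k).re) * (w k * y k))
        = (Real.sqrt ((K k k).re) * Real.sqrt ((K k k).re))
          * ((1 - 1 / ((K k k).re * w k)) * (w k * y k)) by ring, hs]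
    have hπ0 : (K k k).re ≠ 0 := ne_of_gt (hdiag k)
    have hw0 : w k ≠ 0 := hw k
    field_simp
  have e2 : (∑ k, (Real.sqrt ((K k k).re) * (1 - 1 / ((K k k).re * w k))) ^ 2)
      = ∑ k, (K k k).re * (1 - 1 / ((K k k).re * w k)) ^ 2 := by
    refine Finset.sum_congr rfl fun k _ => ?_
    rw [mul_pow, Real.sq_sqrt (hdiag k).le]
  have e3 : (∑ k, (Real.sqrt ((K k k).re) * (w k * y k)) ^ 2)
      = ∑ k, (K k k).re * (w k * y k) ^ 2 := by
    refine Finset.sum_congr rfl fun k _ => ?_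
    rw [mul_pow, Real.sq_sqrt (hdiag k).le]
  rw [e1, e2, e3] at hCS
  have hVQ : (∑ k, (K k k).re * (w k * y k) ^ 2)
      = ∑ k, (K k k).re * (w k * y k) ^ 2 := rfl
  nlinarith [hCS, hQ0]

/-- **MSE bound for a homogeneous linear estimator under a determinantal sampling
design**, and its specialization to the Horvitz–Thompson weights `w_k = 1/K_{kk}`. -/
theorem mse_bound {N : ℕ} (K : Matrix (Fin N) (Fin N) ℂ) (hK : K.IsHermitian)
    (hcontr : ∀ i, hK.eigenvalues i ∈ Set.Icc (0 : ℝ) 1)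
    (hdiag : ∀ k, 0 < (K k k).re)
    (P : Finset (Fin N) → ℝ) (hpos : ∀ s, 0 ≤ P s) (hsum : ∑ s, P s = 1)
    (hDSD : IsDSD P K) (y w : Fin N → ℝ) (hw : ∀ k, w k ≠ 0) :
    (∑ s : Finset (Fin N), P s * ((∑ k ∈ s, w k * y k) - ∑ k, y k) ^ 2) ≤
      (1 + ∑ k, (K k k).re * (1 - 1 / ((K k k).re * w k)) ^ 2) *
        (∑ k, (K k k).re * (w k * y k) ^ 2) ∧
    (∑ s : Finset (Fin N), P s * ((∑ k ∈ s, y k / (K k k).re) - ∑ k, y k) ^ 2) ≤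
      ∑ k, y k ^ 2 / (K k k).re := by
  have hpsd : K.PosSemidef := hK.posSemidef_iff_eigenvalues_nonneg.mpr fun i => (hcontr i).1
  constructor
  · exact mse_key K hK hpsd hdiag P hsum hDSD y w hw
  · have h2 := mse_key K hK hpsd hdiag P hsum hDSD y (fun k => 1 / (K k k).re)
      (fun k => one_div_ne_zero (ne_of_gt (hdiag k)))
    have eL : (∑ s : Finset (Fin N), P s * ((∑ k ∈ s, y k / (K k k).re) - ∑ k, y k) ^ 2)
        = ∑ s : Finset (Fin N), P s * ((∑ k ∈ s, 1 / (K k k).re * y k) - ∑ k, y k) ^ 2 := by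
      refine Finset.sum_congr rfl fun s _ => ?_
      congr 1
      rw [Finset.sum_congr rfl fun k _ => (one_div_mul_eq_div ((K k k).re) (y k)).symm]
    have eS : (∑ k, (K k k).re * (1 - 1 / ((K k k).re * (1 / (K k k).re))) ^ 2) = 0 := by
      refine Finset.sum_eq_zero fun k _ => ?_
      rw [mul_one_div_cancel (ne_of_gt (hdiag k))]
      norm_num
    have eV : (∑ k, (K k k).re * (1 / (K k k).re * y k) ^ 2) = ∑ k, y k ^ 2 / (K k k).re := by
      refine Finset.sum_congr rfl fun k _ => ?_
      have hπ0 : (K k k).re ≠ 0 := ne_of_gt (hdiag k)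
      field_simp
    rw [eL]
    calc (∑ s : Finset (Fin N), P s * ((∑ k ∈ s, 1 / (K k k).re * y k) - ∑ k, y k) ^ 2)
        ≤ (1 + ∑ k, (K k k).re * (1 - 1 / ((K k k).re * (1 / (K k k).re))) ^ 2) *
          (∑ k, (K k k).re * (1 / (K k k).re * y k) ^ 2) := h2
      _ = ∑ k, y k ^ 2 / (K k k).re := by rw [eS, eV, add_zero, one_mul]
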